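/- Riesz–Fréchet–Kolmogorov variant: Let (μ_ε)_{ε>0} be a family of functions bounded in L^∞(0,T), and suppose there exists a constant C such that for all small h > 0 and all ε > 0: ∫₀^{T−h} |μ_ε(t+h) − μ_ε(t)| dt ≤ C(√h + ε). Then there exist a sequence εₙ → 0 and μ ∈ L¹(0,T) such that μ_{εₙ} → μ in L¹(0,T). -/

import Mathlib

open MeasureTheory Filter

private lemma rfk_fin {s : Set ℝ} (hs : volume s ≠ ⊤) :
    IsFiniteMeasure (volume.restrict s) :=
  ⟨by rwa [Measure.restrict_apply_univ, lt_top_iff_ne_top]⟩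

private lemma rfk_integrableOn {f : ℝ → ℝ} (hf : Measurable f) {K : ℝ}
    (hK : ∀ t, |f t| ≤ K) {s : Set ℝ} (hs : volume s ≠ ⊤) :
    IntegrableOn f s := by
  haveI := rfk_fin hs
  exact (integrable_const K).mono' hf.aestronglyMeasurable
    (ae_of_all _ fun t => by simpa [Real.norm_eq_abs] using hK t)

private lemma rfk_continuous {f : ℝ → ℝ} {K : ℝ} (hK : 0 ≤ K)
    (hf : ∀ a b : ℝ, |f b - f a| ≤ K * |b - a|) : Continuous f := by
  have h : LipschitzWith K.toNNReal f := by
    rw [lipschitzWith_iff_dist_le_mul]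
    intro a b
    rw [Real.dist_eq, Real.dist_eq, Real.coe_toNNReal K hK]
    simpa [abs_sub_comm] using hf b a
  exact h.continuous

set_option maxHeartbeats 2000000 in
/-- Riesz–Fréchet–Kolmogorov variant with `ε`-dependent error: a family bounded
in `L^∞(0,T)` whose time translates satisfy
`∫₀^{T-h} |μ_ε(t+h) - μ_ε(t)| dt ≤ C(√h + ε)` admits a sequence `εₙ → 0` along
which it converges in `L¹(0,T)`. -/
theorem stmt15 (T C M : ℝ) (hT : 0 < T)
    (μ : ℝ → ℝ → ℝ)
    (hmeas : ∀ ε : ℝ, 0 < ε → Measurable (μ ε))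
    (hbdd : ∀ ε : ℝ, 0 < ε → ∀ᵐ t ∂(volume.restrict (Set.Ioo 0 T)), |μ ε t| ≤ M)
    (htrans : ∃ h₀ : ℝ, 0 < h₀ ∧ ∀ h : ℝ, 0 < h → h < h₀ → ∀ ε : ℝ, 0 < ε →
      ∫ t in Set.Ioo 0 (T - h), |μ ε (t + h) - μ ε t| ≤ C * (Real.sqrt h + ε)) :
    ∃ (εn : ℕ → ℝ) (ν : ℝ → ℝ), (∀ n, 0 < εn n) ∧ Tendsto εn atTop (nhds 0) ∧
      IntegrableOn ν (Set.Ioo 0 T) ∧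
      Tendsto (fun n => ∫ t in Set.Ioo 0 T, |μ (εn n) t - ν t|) atTop (nhds 0) := by
  obtain ⟨h₀, hh₀, htr⟩ := htrans
  have hIfin : volume (Set.Ioo (0:ℝ) T) ≠ ⊤ := by
    rw [Real.volume_Ioo]; exact ENNReal.ofReal_ne_top
  -- `M ≥ 0`
  have hM0 : 0 ≤ M := by
    have hne : volume.restrict (Set.Ioo (0:ℝ) T) ≠ 0 := by
      intro h0
      have : (volume.restrict (Set.Ioo (0:ℝ) T)) Set.univ = 0 := by rw [h0]; rfl
      rw [Measure.restrict_apply_univ, Real.volume_Ioo] at this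
      rw [ENNReal.ofReal_eq_zero] at this
      linarith
    haveI : (ae (volume.restrict (Set.Ioo (0:ℝ) T))).NeBot := ae_neBot.mpr hne
    obtain ⟨t, ht⟩ := (hbdd 1 one_pos).exists
    exact le_trans (abs_nonneg _) ht
  -- `C ≥ 0`
  have hC0 : 0 ≤ C := by
    have h1 := htr (h₀/2) (by positivity) (by linarith) 1 one_pos
    have h2 : (0:ℝ) ≤ ∫ t in Set.Ioo 0 (T - h₀/2), |μ 1 (t + h₀/2) - μ 1 t| :=
      integral_nonneg fun t => abs_nonneg _
    nlinarith [Real.sqrt_nonneg (h₀/2)]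
  -- the sequence of parameters
  set ε : ℕ → ℝ := fun n => ((n:ℝ)+1)⁻¹ with hε
  have hεpos : ∀ n, 0 < ε n := fun n => by positivity
  have hεto : Tendsto ε atTop (nhds 0) := by
    have := tendsto_one_div_add_atTop_nhds_zero_nat (𝕜 := ℝ)
    simpa [hε, one_div] using this
  -- truncated functions
  set g : ℕ → ℝ → ℝ := fun n t => max (-M) (min M (μ (ε n) t)) with hg
  have hgmeas : ∀ n, Measurable (g n) :=
    fun n => measurable_const.max (measurable_const.min (hmeas _ (hεpos n)))
  have hgbd : ∀ n t, |g n t| ≤ M := by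
    intro n t
    rw [abs_le]
    refine ⟨le_max_left _ _, max_le (by linarith) (min_le_left _ _)⟩
  have hgae : ∀ n, ∀ᵐ t ∂(volume : Measure ℝ), t ∈ Set.Ioo 0 T → g n t = μ (ε n) t := by
    intro n
    have h1 := (ae_restrict_iff' measurableSet_Ioo).mp (hbdd (ε n) (hεpos n))
    filter_upwards [h1] with t ht hmem
    have h2 := ht hmem
    rw [abs_le] at h2
    simp [hg, min_eq_right h2.2, max_eq_right h2.1]
  have hgtrans : ∀ (n : ℕ) (s : ℝ), 0 < s → s < h₀ →
      ∫ t in Set.Ioo 0 (T - s), |g n (t + s) - g n t| ≤ C * (Real.sqrt s + ε n) := by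
    intro n s hs hsh
    have key : ∀ᵐ t ∂(volume.restrict (Set.Ioo 0 (T - s))),
        |g n (t + s) - g n t| = |μ (ε n) (t + s) - μ (ε n) t| := by
      have h1 := hgae n
      have h2 : ∀ᵐ t ∂(volume : Measure ℝ), t + s ∈ Set.Ioo 0 T → g n (t + s) = μ (ε n) (t + s) :=
        (measurePreserving_add_right volume s).quasiMeasurePreserving.ae h1
      filter_upwards [ae_restrict_of_ae h1, ae_restrict_of_ae h2,
        ae_restrict_mem measurableSet_Ioo] with t ht1 ht2 htm
      rw [ht1 ⟨htm.1, by linarith [htm.2]⟩, ht2 ⟨by linarith [htm.1], by linarith [htm.2]⟩]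
    rw [integral_congr_ae key]
    exact htr s hs hsh (ε n) (hεpos n)
  -- primitives
  set G : ℕ → ℝ → ℝ := fun n t => ∫ x in (0:ℝ)..t, g n x with hG
  have hgint : ∀ (n : ℕ) (a b : ℝ), IntervalIntegrable (g n) volume a b := by
    intro n a b
    rw [intervalIntegrable_iff]
    exact rfk_integrableOn (hgmeas n) (hgbd n) (by exact (measure_Ioc_lt_top).ne)
  have hGsub : ∀ (n : ℕ) (a b : ℝ), G n b - G n a = ∫ x in a..b, g n x :=
    fun n a b => intervalIntegral.integral_interval_sub_left (hgint n 0 b) (hgint n 0 a)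
  have hGlip : ∀ (n : ℕ) (a b : ℝ), |G n b - G n a| ≤ M * |b - a| := by
    intro n a b
    rw [hGsub n a b]
    have := intervalIntegral.norm_integral_le_of_norm_le_const
      (f := g n) (a := a) (b := b) (C := M) (fun x _ => by simpa [Real.norm_eq_abs] using hgbd n x)
    simpa [Real.norm_eq_abs] using this
  have hGcont : ∀ n, Continuous (G n) := fun n => rfk_continuous hM0 (hGlip n)
  -- extraction of a pointwise convergent subsequence of the primitives
  have hcompact : IsCompact (Set.univ.pi fun q : ℚ =>
      Set.Icc (-(M * |(q:ℝ)|)) (M * |(q:ℝ)|)) :=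
    isCompact_univ_pi fun q => isCompact_Icc
  have hmem : ∀ n, (fun q : ℚ => G n (q:ℝ)) ∈ Set.univ.pi fun q : ℚ =>
      Set.Icc (-(M * |(q:ℝ)|)) (M * |(q:ℝ)|) := by
    intro n q _
    have h1 := hGlip n 0 (q:ℝ)
    have h2 : G n 0 = 0 := intervalIntegral.integral_same
    rw [h2, sub_zero, sub_zero] at h1
    rw [abs_le] at h1
    exact ⟨h1.1, h1.2⟩
  obtain ⟨a, -, φ, hφ, hφt⟩ := hcompact.tendsto_subseq hmem
  have hcoord : ∀ q : ℚ, Tendsto (fun k => G (φ k) (q:ℝ)) atTop (nhds (a q)) := by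
    rw [tendsto_pi_nhds] at hφt
    exact fun q => hφt q
  -- pointwise convergence at every real point
  have hGconv : ∀ t : ℝ, ∃ L, Tendsto (fun k => G (φ k) t) atTop (nhds L) := by
    intro t
    refine cauchySeq_tendsto_of_complete ?_
    rw [Metric.cauchySeq_iff]
    intro δ hδ
    have hd : 0 < δ / (4 * (M + 1)) := by positivity
    obtain ⟨q, hq1, hq2⟩ := exists_rat_btwn (show t < t + δ / (4 * (M + 1)) by linarith)
    have hqt : |(q:ℝ) - t| ≤ δ / (4 * (M + 1)) := by
      rw [abs_of_pos (by linarith)]; linarith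
    have hMd : M * |(q:ℝ) - t| ≤ δ / 4 := by
      have e1 : M * |(q:ℝ) - t| ≤ (M + 1) * (δ / (4 * (M + 1))) := by
        apply mul_le_mul (by linarith) hqt (abs_nonneg _) (by linarith)
      have e2 : (M + 1) * (δ / (4 * (M + 1))) = δ / 4 := by
        field_simp
      linarith
    have hc := (hcoord q).cauchySeq
    rw [Metric.cauchySeq_iff] at hc
    obtain ⟨N, hN⟩ := hc (δ/2) (by linarith)
    refine ⟨N, fun j hj k hk => ?_⟩
    have e1 := dist_triangle4 (G (φ j) t) (G (φ j) (q:ℝ)) (G (φ k) (q:ℝ)) (G (φ k) t)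
    have l1 : dist (G (φ j) t) (G (φ j) (q:ℝ)) ≤ δ / 4 := by
      rw [Real.dist_eq]
      have h5 := hGlip (φ j) (q:ℝ) t
      rw [abs_sub_comm t ((q:ℝ))] at h5
      linarith
    have l3 : dist (G (φ k) (q:ℝ)) (G (φ k) t) ≤ δ / 4 := by
      rw [Real.dist_eq]
      calc |G (φ k) (q:ℝ) - G (φ k) t| ≤ M * |(q:ℝ) - t| := hGlip (φ k) t (q:ℝ)
        _ ≤ δ / 4 := hMd
    have l2 := hN j hj k hk
    linarith
  choose Gi hGi using hGconv
  have hGilip : ∀ x y : ℝ, |Gi y - Gi x| ≤ M * |y - x| := by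
    intro x y
    have h1 : Tendsto (fun k => |G (φ k) y - G (φ k) x|) atTop (nhds |Gi y - Gi x|) :=
      ((hGi y).sub (hGi x)).abs
    exact le_of_tendsto h1 (Eventually.of_forall fun k => hGlip _ x y)
  have hGicont : Continuous Gi := rfk_continuous hM0 hGilip
  -- bound for difference quotients
  have hAbd : ∀ (n : ℕ) (h t : ℝ), 0 < h → |(G n (t + h) - G n t) / h| ≤ M := by
    intro n h t hh
    rw [abs_div, abs_of_pos hh, div_le_iff₀ hh]
    have h5 := hGlip n t (t + h)
    simpa [add_sub_cancel_left, abs_of_pos hh] using h5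
  have hGibd : ∀ (h t : ℝ), 0 < h → |(Gi (t + h) - Gi t) / h| ≤ M := by
    intro h t hh
    rw [abs_div, abs_of_pos hh, div_le_iff₀ hh]
    have h5 := hGilip t (t + h)
    simpa [add_sub_cancel_left, abs_of_pos hh] using h5
  -- closeness to the average
  have hterm1 : ∀ (n : ℕ) (h : ℝ), 0 < h → h < h₀ →
      ∫ t in Set.Ioo 0 (T - h), |g n t - (G n (t + h) - G n t) / h| ≤
        C * (Real.sqrt h + ε n) := by
    intro n h hh hhh₀
    haveI F1 : IsFiniteMeasure (volume.restrict (Set.Ioo 0 (T - h))) :=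
      rfk_fin (by rw [Real.volume_Ioo]; exact ENNReal.ofReal_ne_top)
    haveI F2 : IsFiniteMeasure (volume.restrict (Set.Ioc (0:ℝ) h)) :=
      rfk_fin measure_Ioc_lt_top.ne
    have hptwise : ∀ t : ℝ, |g n t - (G n (t + h) - G n t) / h| ≤
        (1 / h) * ∫ s in Set.Ioc 0 h, |g n (t + s) - g n t| := by
      intro t
      have hint2 : IntervalIntegrable (fun s => g n (t + s)) volume 0 h := by
        rw [intervalIntegrable_iff]
        exact rfk_integrableOn ((hgmeas n).comp (measurable_const_add t))
          (fun s => hgbd n _) measure_Ioc_lt_top.ne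
      have e1 : G n (t + h) - G n t = ∫ s in (0:ℝ)..h, g n (t + s) := by
        rw [hGsub n t (t + h),
          intervalIntegral.integral_comp_add_left (f := fun x => g n x) (a := (0:ℝ)) (b := h) t,
          add_zero]
      have e2 : g n t - (G n (t + h) - G n t) / h
          = (1 / h) * ∫ s in (0:ℝ)..h, (g n t - g n (t + s)) := by
        rw [intervalIntegral.integral_sub intervalIntegrable_const hint2,
          intervalIntegral.integral_const, ← e1, sub_zero, smul_eq_mul]
        field_simp
      calc |g n t - (G n (t + h) - G n t) / h|
          = (1 / h) * |∫ s in (0:ℝ)..h, (g n t - g n (t + s))| := by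
            rw [e2, abs_mul, abs_of_pos (by positivity : (0:ℝ) < 1 / h)]
        _ ≤ (1 / h) * ∫ s in (0:ℝ)..h, |g n t - g n (t + s)| := by
            have h3 := intervalIntegral.abs_integral_le_integral_abs (μ := volume)
              (f := fun s => g n t - g n (t + s)) (le_of_lt hh)
            exact mul_le_mul_of_nonneg_left h3 (by positivity)
        _ = (1 / h) * ∫ s in Set.Ioc 0 h, |g n (t + s) - g n t| := by
            rw [intervalIntegral.integral_of_le (le_of_lt hh)]
            congr 1
            simp_rw [abs_sub_comm (g n t)]
    have hFmeas : Measurable (Function.uncurry fun t s => |g n (t + s) - g n t|) := by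
      apply Measurable.abs
      exact ((hgmeas n).comp measurable_add).sub ((hgmeas n).comp measurable_fst)
    have hF : Integrable (Function.uncurry fun t s => |g n (t + s) - g n t|)
        ((volume.restrict (Set.Ioo 0 (T - h))).prod (volume.restrict (Set.Ioc 0 h))) := by
      refine (integrable_const (M + M)).mono' hFmeas.aestronglyMeasurable (ae_of_all _ ?_)
      rintro ⟨t, s⟩
      simp only [Function.uncurry, Real.norm_eq_abs, abs_abs]
      calc |g n (t + s) - g n t| ≤ |g n (t + s)| + |g n t| := by
            simpa [Real.norm_eq_abs] using norm_sub_le (g n (t + s)) (g n t)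
        _ ≤ M + M := add_le_add (hgbd _ _) (hgbd _ _)
    have hLHSint : IntegrableOn (fun t => |g n t - (G n (t + h) - G n t) / h|)
        (Set.Ioo 0 (T - h)) := by
      refine rfk_integrableOn ?_ (K := M + M) ?_
        (by rw [Real.volume_Ioo]; exact ENNReal.ofReal_ne_top)
      · exact ((hgmeas n).sub ((((hGcont n).comp (continuous_id.add continuous_const)).sub
          (hGcont n)).div_const h).measurable).abs
      · intro t
        rw [abs_abs]
        calc |g n t - (G n (t + h) - G n t) / h|
            ≤ |g n t| + |(G n (t + h) - G n t) / h| := by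
              rw [sub_eq_add_neg]
              exact (abs_add_le _ _).trans_eq (by rw [abs_neg])
          _ ≤ M + M := add_le_add (hgbd _ _) (hAbd n h t hh)
    have hJint : Integrable (fun t => ∫ s in Set.Ioc 0 h, |g n (t + s) - g n t|)
        (volume.restrict (Set.Ioo 0 (T - h))) := hF.integral_prod_left
    have swap := integral_integral_swap hF
    have hinner : ∀ s ∈ Set.Ioc (0:ℝ) h,
        ∫ t in Set.Ioo 0 (T - h), |g n (t + s) - g n t| ≤ C * (Real.sqrt s + ε n) := by
      intro s hs
      have hsub : Set.Ioo (0:ℝ) (T - h) ⊆ Set.Ioo 0 (T - s) :=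
        Set.Ioo_subset_Ioo le_rfl (by linarith [hs.2])
      have hbig : IntegrableOn (fun t => |g n (t + s) - g n t|) (Set.Ioo 0 (T - s)) := by
        refine rfk_integrableOn ?_ (K := M + M) ?_
          (by rw [Real.volume_Ioo]; exact ENNReal.ofReal_ne_top)
        · exact (((hgmeas n).comp (measurable_add_const s)).sub (hgmeas n)).abs
        · intro t
          rw [abs_abs]
          calc |g n (t + s) - g n t| ≤ |g n (t + s)| + |g n t| := by
                simpa [Real.norm_eq_abs] using norm_sub_le (g n (t + s)) (g n t)
            _ ≤ M + M := add_le_add (hgbd _ _) (hgbd _ _)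
      calc ∫ t in Set.Ioo 0 (T - h), |g n (t + s) - g n t|
          ≤ ∫ t in Set.Ioo 0 (T - s), |g n (t + s) - g n t| :=
            setIntegral_mono_set hbig (ae_of_all _ fun t => abs_nonneg _)
              (HasSubset.Subset.eventuallyLE hsub)
        _ ≤ C * (Real.sqrt s + ε n) := hgtrans n s hs.1 (lt_of_le_of_lt hs.2 hhh₀)
    have hinnerint : Integrable (fun s => ∫ t in Set.Ioo 0 (T - h), |g n (t + s) - g n t|)
        (volume.restrict (Set.Ioc 0 h)) := hF.integral_prod_right
    have hsqint : IntegrableOn (fun s => C * (Real.sqrt s + ε n)) (Set.Ioc 0 h) :=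
      (continuous_const.mul (Real.continuous_sqrt.add continuous_const)).integrableOn_Ioc
    calc ∫ t in Set.Ioo 0 (T - h), |g n t - (G n (t + h) - G n t) / h|
        ≤ ∫ t in Set.Ioo 0 (T - h), (1 / h) * ∫ s in Set.Ioc 0 h, |g n (t + s) - g n t| :=
          integral_mono hLHSint (hJint.const_mul _) hptwise
      _ = (1 / h) * ∫ t in Set.Ioo 0 (T - h), ∫ s in Set.Ioc 0 h, |g n (t + s) - g n t| :=
          integral_const_mul _ _
      _ = (1 / h) * ∫ s in Set.Ioc 0 h, ∫ t in Set.Ioo 0 (T - h), |g n (t + s) - g n t| := by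
          rw [swap]
      _ ≤ (1 / h) * ∫ s in Set.Ioc 0 h, C * (Real.sqrt s + ε n) := by
          refine mul_le_mul_of_nonneg_left ?_ (by positivity)
          refine integral_mono_ae hinnerint hsqint ?_
          filter_upwards [ae_restrict_mem measurableSet_Ioc] with s hs
          exact hinner s hs
      _ ≤ (1 / h) * (C * (Real.sqrt h + ε n) * h) := by
          refine mul_le_mul_of_nonneg_left ?_ (by positivity)
          calc ∫ s in Set.Ioc 0 h, C * (Real.sqrt s + ε n)
              ≤ ∫ s in Set.Ioc (0:ℝ) h, C * (Real.sqrt h + ε n) := by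
                refine integral_mono_ae hsqint (integrable_const _) ?_
                filter_upwards [ae_restrict_mem measurableSet_Ioc] with s hs
                have h6 := Real.sqrt_le_sqrt hs.2
                exact mul_le_mul_of_nonneg_left (add_le_add h6 le_rfl) hC0
            _ = C * (Real.sqrt h + ε n) * h := by
                rw [integral_const, measureReal_restrict_apply_univ, Real.volume_real_Ioc,
                  smul_eq_mul, max_eq_left (by linarith : (0:ℝ) ≤ h - 0)]
                ring
      _ = C * (Real.sqrt h + ε n) := by field_simp
  -- convergence of the averages
  have hterm2 : ∀ h : ℝ, 0 < h → Tendsto (fun k => ∫ t in Set.Ioo 0 (T - h),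
      |(G (φ k) (t + h) - G (φ k) t) / h - (Gi (t + h) - Gi t) / h|) atTop (nhds 0) := by
    intro h hh
    haveI := rfk_fin (show volume (Set.Ioo (0:ℝ) (T - h)) ≠ ⊤ by
      rw [Real.volume_Ioo]; exact ENNReal.ofReal_ne_top)
    have hFcont : ∀ k, Continuous (fun t =>
        |(G (φ k) (t + h) - G (φ k) t) / h - (Gi (t + h) - Gi t) / h|) := by
      intro k
      exact (((((hGcont (φ k)).comp (continuous_id.add continuous_const)).sub
        (hGcont (φ k))).div_const h).sub
        (((hGicont.comp (continuous_id.add continuous_const)).sub hGicont).div_const h)).abs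
    have key := tendsto_integral_of_dominated_convergence
      (μ := volume.restrict (Set.Ioo 0 (T - h)))
      (F := fun k t => |(G (φ k) (t + h) - G (φ k) t) / h - (Gi (t + h) - Gi t) / h|)
      (f := fun _ => (0:ℝ)) (bound := fun _ => M + M)
      (fun k => (hFcont k).aestronglyMeasurable)
      (integrable_const _)
      (fun k => ae_of_all _ fun t => by
        rw [Real.norm_eq_abs, abs_abs, sub_eq_add_neg]
        exact (abs_add_le _ _).trans (by
          rw [abs_neg]
          exact add_le_add (hAbd (φ k) h t hh) (hGibd h t hh)))
      (ae_of_all _ fun t => by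
        have l1 : Tendsto (fun k => (G (φ k) (t + h) - G (φ k) t) / h) atTop
            (nhds ((Gi (t + h) - Gi t) / h)) := ((hGi (t + h)).sub (hGi t)).div_const h
        have l2 := (l1.sub (tendsto_const_nhds (x := (Gi (t + h) - Gi t) / h))).abs
        simpa using l2)
    simpa using key
  -- the L¹ functions
  haveI FI : IsFiniteMeasure (volume.restrict (Set.Ioo (0:ℝ) T)) := rfk_fin hIfin
  have hguint : ∀ k : ℕ, Integrable (g (φ k)) (volume.restrict (Set.Ioo 0 T)) :=
    fun k => rfk_integrableOn (hgmeas _) (hgbd _) hIfin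
  set V : ℕ → (Lp ℝ 1 (volume.restrict (Set.Ioo 0 T))) := fun k => (hguint k).toL1 _ with hV
  have hdist : ∀ j k : ℕ, dist (V j) (V k) = ∫ t in Set.Ioo 0 T, |g (φ j) t - g (φ k) t| := by
    intro j k
    rw [hV, dist_eq_norm]
    have e0 : (hguint j).toL1 _ - (hguint k).toL1 _
        = ((hguint j).sub (hguint k)).toL1 (g (φ j) - g (φ k)) :=
      (Integrable.toL1_sub _ _ _ _).symm
    rw [e0, L1.norm_of_fun_eq_integral_norm]
    apply integral_congr_ae
    filter_upwards with t
    rw [Pi.sub_apply, Real.norm_eq_abs]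
  -- Cauchy in L¹
  have hVcauchy : CauchySeq V := by
    rw [Metric.cauchySeq_iff]
    intro δ hδ
    set h : ℝ := min (min (h₀ / 2) (T / 2)) (min ((δ / (16 * (C + 1)))^2) (δ / (16 * (M + 1))))
      with hhdef
    have hhpos : 0 < h :=
      lt_min (lt_min (by positivity) (by positivity)) (lt_min (by positivity) (by positivity))
    have hle1 : h ≤ h₀ / 2 := (min_le_left _ _).trans (min_le_left _ _)
    have hle2 : h ≤ T / 2 := (min_le_left _ _).trans (min_le_right _ _)
    have hhh₀ : h < h₀ := by linarith
    have hhT : h < T := by linarith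
    have hd1 : h ≤ (δ / (16 * (C + 1)))^2 := (min_le_right _ _).trans (min_le_left _ _)
    have hd2 : h ≤ δ / (16 * (M + 1)) := (min_le_right _ _).trans (min_le_right _ _)
    have hsq : Real.sqrt h ≤ δ / (16 * (C + 1)) := by
      have h5 := Real.sqrt_le_sqrt hd1
      rwa [Real.sqrt_sq (by positivity)] at h5
    have hCsq : C * Real.sqrt h ≤ δ / 16 := by
      have e1 : C * Real.sqrt h ≤ (C + 1) * (δ / (16 * (C + 1))) :=
        mul_le_mul (by linarith) hsq (Real.sqrt_nonneg _) (by linarith)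
      have e2 : (C + 1) * (δ / (16 * (C + 1))) = δ / 16 := by field_simp
      linarith
    have hMh : (M + M) * h ≤ δ / 8 := by
      have e1 : (M + M) * h ≤ (2 * (M + 1)) * (δ / (16 * (M + 1))) :=
        mul_le_mul (by linarith) hd2 hhpos.le (by linarith)
      have e2 : (2 * (M + 1)) * (δ / (16 * (M + 1))) = δ / 8 := by field_simp; ring
      linarith
    have hεφto : Tendsto (fun k => C * ε (φ k)) atTop (nhds 0) := by
      have h5 := (hεto.comp hφ.tendsto_atTop).const_mul C
      simpa using h5
    obtain ⟨N₁, hN₁⟩ := (Metric.tendsto_atTop.mp hεφto) (δ / 16) (by positivity)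
    obtain ⟨N₂, hN₂⟩ := (Metric.tendsto_atTop.mp (hterm2 h hhpos)) (δ / 16) (by positivity)
    refine ⟨max N₁ N₂, fun j hj k hk => ?_⟩
    rw [hdist j k]
    -- integrability facts
    have hIoofin : volume (Set.Ioo (0:ℝ) (T - h)) ≠ ⊤ := by
      rw [Real.volume_Ioo]; exact ENNReal.ofReal_ne_top
    have hIcofin : volume (Set.Ico (T - h) T) ≠ ⊤ := by
      rw [Real.volume_Ico]; exact ENNReal.ofReal_ne_top
    haveI := rfk_fin hIoofin
    haveI := rfk_fin hIcofin
    have hdmeas : Measurable (fun t => |g (φ j) t - g (φ k) t|) :=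
      ((hgmeas _).sub (hgmeas _)).abs
    have hdbd : ∀ t, |(fun t => |g (φ j) t - g (φ k) t|) t| ≤ M + M := by
      intro t
      rw [abs_abs, sub_eq_add_neg]
      exact (abs_add_le _ _).trans (by rw [abs_neg]; exact add_le_add (hgbd _ _) (hgbd _ _))
    have hi1 : ∀ m : ℕ, IntegrableOn
        (fun t => |g (φ m) t - (G (φ m) (t + h) - G (φ m) t) / h|) (Set.Ioo 0 (T - h)) := by
      intro m
      refine rfk_integrableOn ?_ (K := M + M) ?_ hIoofin
      · exact ((hgmeas _).sub ((((hGcont _).comp (continuous_id.add continuous_const)).sub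
          (hGcont _)).div_const h).measurable).abs
      · intro t
        rw [abs_abs, sub_eq_add_neg]
        exact (abs_add_le _ _).trans (by
          rw [abs_neg]; exact add_le_add (hgbd _ _) (hAbd _ h t hhpos))
    have hi2 : ∀ m : ℕ, IntegrableOn (fun t =>
        |(G (φ m) (t + h) - G (φ m) t) / h - (Gi (t + h) - Gi t) / h|) (Set.Ioo 0 (T - h)) := by
      intro m
      refine rfk_integrableOn ?_ (K := M + M) ?_ hIoofin
      · exact (((((hGcont _).comp (continuous_id.add continuous_const)).sub
          (hGcont _)).div_const h).sub
          (((hGicont.comp (continuous_id.add continuous_const)).sub hGicont).div_const h)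
          ).measurable.abs
      · intro t
        rw [abs_abs, sub_eq_add_neg]
        exact (abs_add_le _ _).trans (by
          rw [abs_neg]; exact add_le_add (hAbd _ h t hhpos) (hGibd h t hhpos))
    -- split the integral
    have hunion : Set.Ioo (0:ℝ) (T - h) ∪ Set.Ico (T - h) T = Set.Ioo 0 T :=
      Set.Ioo_union_Ico_eq_Ioo (by linarith) (by linarith)
    have hsplit : ∫ t in Set.Ioo 0 T, |g (φ j) t - g (φ k) t|
        = (∫ t in Set.Ioo 0 (T - h), |g (φ j) t - g (φ k) t|)
          + ∫ t in Set.Ico (T - h) T, |g (φ j) t - g (φ k) t| := by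
      rw [← hunion]
      exact setIntegral_union
        (Set.disjoint_left.mpr fun t ht ht' => absurd ht.2 (not_lt.mpr ht'.1)) measurableSet_Ico
        (rfk_integrableOn hdmeas hdbd hIoofin) (rfk_integrableOn hdmeas hdbd hIcofin)
    -- boundary piece
    have hp2 : ∫ t in Set.Ico (T - h) T, |g (φ j) t - g (φ k) t| ≤ (M + M) * h := by
      calc ∫ t in Set.Ico (T - h) T, |g (φ j) t - g (φ k) t|
          ≤ ∫ _t in Set.Ico (T - h) T, (M + M) := by
            refine integral_mono (rfk_integrableOn hdmeas hdbd hIcofin) (integrable_const _) ?_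
            intro t
            have := hdbd t
            rwa [abs_abs] at this
        _ = (M + M) * h := by
            rw [integral_const, measureReal_restrict_apply_univ, Real.volume_real_Ico, smul_eq_mul,
              max_eq_left (by linarith : (0:ℝ) ≤ T - (T - h))]
            ring_nf
    -- main piece
    have hpt : ∀ t : ℝ, |g (φ j) t - g (φ k) t| ≤
        |g (φ j) t - (G (φ j) (t + h) - G (φ j) t) / h|
        + |(G (φ j) (t + h) - G (φ j) t) / h - (Gi (t + h) - Gi t) / h|
        + |(G (φ k) (t + h) - G (φ k) t) / h - (Gi (t + h) - Gi t) / h|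
        + |g (φ k) t - (G (φ k) (t + h) - G (φ k) t) / h| := by
      intro t
      have e1 := abs_sub_le (g (φ j) t) ((Gi (t + h) - Gi t) / h) (g (φ k) t)
      have e2 := abs_sub_le (g (φ j) t) ((G (φ j) (t + h) - G (φ j) t) / h)
        ((Gi (t + h) - Gi t) / h)
      have e3 := abs_sub_le ((Gi (t + h) - Gi t) / h) ((G (φ k) (t + h) - G (φ k) t) / h)
        (g (φ k) t)
      have e4 : |(Gi (t + h) - Gi t) / h - (G (φ k) (t + h) - G (φ k) t) / h|
          = |(G (φ k) (t + h) - G (φ k) t) / h - (Gi (t + h) - Gi t) / h| := abs_sub_comm _ _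
      have e5 : |(G (φ k) (t + h) - G (φ k) t) / h - g (φ k) t|
          = |g (φ k) t - (G (φ k) (t + h) - G (φ k) t) / h| := abs_sub_comm _ _
      rw [e4, e5] at e3
      linarith
    have hp1 : ∫ t in Set.Ioo 0 (T - h), |g (φ j) t - g (φ k) t| ≤
        (∫ t in Set.Ioo 0 (T - h), |g (φ j) t - (G (φ j) (t + h) - G (φ j) t) / h|)
        + (∫ t in Set.Ioo 0 (T - h),
            |(G (φ j) (t + h) - G (φ j) t) / h - (Gi (t + h) - Gi t) / h|)
        + (∫ t in Set.Ioo 0 (T - h),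
            |(G (φ k) (t + h) - G (φ k) t) / h - (Gi (t + h) - Gi t) / h|)
        + ∫ t in Set.Ioo 0 (T - h), |g (φ k) t - (G (φ k) (t + h) - G (φ k) t) / h| := by
      have hsum := ((((hi1 j).add (hi2 j)).add (hi2 k)).add (hi1 k))
      calc ∫ t in Set.Ioo 0 (T - h), |g (φ j) t - g (φ k) t|
          ≤ ∫ t in Set.Ioo 0 (T - h),
              (|g (φ j) t - (G (φ j) (t + h) - G (φ j) t) / h|
              + |(G (φ j) (t + h) - G (φ j) t) / h - (Gi (t + h) - Gi t) / h|
              + |(G (φ k) (t + h) - G (φ k) t) / h - (Gi (t + h) - Gi t) / h|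
              + |g (φ k) t - (G (φ k) (t + h) - G (φ k) t) / h|) :=
            integral_mono (rfk_integrableOn hdmeas hdbd hIoofin) hsum hpt
        _ = _ := by
            have i2 : Integrable (fun t =>
                |g (φ j) t - (G (φ j) (t + h) - G (φ j) t) / h|
                + |(G (φ j) (t + h) - G (φ j) t) / h - (Gi (t + h) - Gi t) / h|)
                (volume.restrict (Set.Ioo 0 (T - h))) := (hi1 j).add (hi2 j)
            have i3 : Integrable (fun t =>
                |g (φ j) t - (G (φ j) (t + h) - G (φ j) t) / h|
                + |(G (φ j) (t + h) - G (φ j) t) / h - (Gi (t + h) - Gi t) / h|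
                + |(G (φ k) (t + h) - G (φ k) t) / h - (Gi (t + h) - Gi t) / h|)
                (volume.restrict (Set.Ioo 0 (T - h))) := i2.add (hi2 k)
            rw [integral_add i3 (hi1 k), integral_add i2 (hi2 k),
              integral_add (hi1 j) (hi2 j)]
    -- numerical bounds
    have hb1 := hterm1 (φ j) h hhpos hhh₀
    have hb4 := hterm1 (φ k) h hhpos hhh₀
    have hb2 : ∫ t in Set.Ioo 0 (T - h),
        |(G (φ j) (t + h) - G (φ j) t) / h - (Gi (t + h) - Gi t) / h| < δ / 16 := by
      have h5 := hN₂ j (le_trans (le_max_right N₁ N₂) hj)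
      rw [Real.dist_eq, sub_zero, abs_of_nonneg (integral_nonneg fun t => abs_nonneg _)] at h5
      exact h5
    have hb3 : ∫ t in Set.Ioo 0 (T - h),
        |(G (φ k) (t + h) - G (φ k) t) / h - (Gi (t + h) - Gi t) / h| < δ / 16 := by
      have h5 := hN₂ k (le_trans (le_max_right N₁ N₂) hk)
      rw [Real.dist_eq, sub_zero, abs_of_nonneg (integral_nonneg fun t => abs_nonneg _)] at h5
      exact h5
    have hbε1 : C * ε (φ j) < δ / 16 := by
      have h5 := hN₁ j (le_trans (le_max_left N₁ N₂) hj)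
      rwa [Real.dist_eq, sub_zero, abs_of_nonneg (by positivity)] at h5
    have hbε2 : C * ε (φ k) < δ / 16 := by
      have h5 := hN₁ k (le_trans (le_max_left N₁ N₂) hk)
      rwa [Real.dist_eq, sub_zero, abs_of_nonneg (by positivity)] at h5
    have expand1 : C * (Real.sqrt h + ε (φ j)) = C * Real.sqrt h + C * ε (φ j) := by ring
    have expand2 : C * (Real.sqrt h + ε (φ k)) = C * Real.sqrt h + C * ε (φ k) := by ring
    rw [hsplit]
    rw [expand1] at hb1
    rw [expand2] at hb4
    linarith
  -- pass to the limit
  obtain ⟨ν', hν'⟩ := cauchySeq_tendsto_of_complete hVcauchy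
  refine ⟨fun k => ε (φ k), fun t => ν' t, fun k => hεpos _, ?_, ?_, ?_⟩
  · exact hεto.comp hφ.tendsto_atTop
  · exact L1.integrable_coeFn ν'
  · have h1 : Tendsto (fun k => dist (V k) ν') atTop (nhds 0) :=
      tendsto_iff_dist_tendsto_zero.mp hν'
    refine Tendsto.congr (fun k => ?_) h1
    have e1 : dist (V k) ν' = ∫ t in Set.Ioo 0 T, |g (φ k) t - ν' t| := by
      rw [dist_eq_norm, L1.norm_eq_integral_norm]
      apply integral_congr_ae
      filter_upwards [Lp.coeFn_sub (V k) ν', (hguint k).coeFn_toL1] with t ht1 ht2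
      rw [Real.norm_eq_abs, ht1, Pi.sub_apply, ht2]
    have e2 : ∫ t in Set.Ioo 0 T, |μ (ε (φ k)) t - ν' t|
        = ∫ t in Set.Ioo 0 T, |g (φ k) t - ν' t| := by
      apply integral_congr_ae
      filter_upwards [ae_restrict_of_ae (hgae (φ k)), ae_restrict_mem measurableSet_Ioo]
        with t ht1 ht2
      rw [ht1 ht2]
    rw [e1, ← e2]
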